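/- Transience criterion: Let S be a countable set and P a transition matrix on S. Assume the Markov chain with transition matrix P is semi-irreducible, i.e., it has a unique closed communicating class S₀ and every state of S₀ is accessible from every state of S. Let τ : S → ℕ be a step-size function with positive integer values bounded by T_max, and let (Z̃_n) be the associated embedded chain Z̃_n = Z_{t_n}, t_0 = 0, t_{n+1} = t_n + τ(Z_{t_n}). Suppose there exist a function f : S → ℝ and positive reals ε, c, b such that, setting A = {i ∈ S : f(i) > c}: (i) A ∩ S₀ ≠ ∅ and (S \ A) ∩ S₀ ≠ ∅; (ii) E(f(Z̃_{n+1}) − f(Z̃_n) | Z̃_n = i) ≥ ε for every i ∈ A; and (iii) for all i, j ∈ S, |f(j) − f(i)| > b implies P(i,j) = 0. Then every state of the chain is transient, i.e., for every i ∈ S, ℙ_i(∃ n ≥ 1, Z_n = i) < 1. -/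

import Mathlib

open scoped ENNReal Classical

/-- `nStep P n i j` is the `n`-step transition probability of the Markov chain with
one-step transition matrix `P`. -/
noncomputable def nStep {S : Type*} (P : S → S → ℝ) : ℕ → S → S → ℝ
  | 0, i, j => if i = j then 1 else 0
  | n + 1, i, j => ∑' k : S, P i k * nStep P n k j

/-- `j` is accessible from `i` if some `n`-step transition probability from `i`
to `j` is positive (`n ≥ 0`). -/
def Accessible {S : Type*} (P : S → S → ℝ) (i j : S) : Prop :=
  ∃ n : ℕ, 0 < nStep P n i j

/-- `i` and `j` communicate if each is accessible from the other. -/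
def Communicates {S : Type*} (P : S → S → ℝ) (i j : S) : Prop :=
  Accessible P i j ∧ Accessible P j i

/-- The communicating class of `s`: the set of states communicating with `s`. -/
def commClass {S : Type*} (P : S → S → ℝ) (s : S) : Set S :=
  {j | Communicates P s j}

/-- A set is a communicating class if it is the communicating class of some state. -/
def IsCommClass {S : Type*} (P : S → S → ℝ) (C : Set S) : Prop :=
  ∃ s : S, C = commClass P s

/-- A set `C` is closed if `i ∈ C` and `P i j > 0` imply `j ∈ C`. -/
def IsClosedClass {S : Type*} (P : S → S → ℝ) (C : Set S) : Prop :=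
  ∀ i ∈ C, ∀ j, 0 < P i j → j ∈ C

/-- `hitProb P V n i = ℙ_i(τ_V = n)`, the probability that the chain with transition
matrix `P` started at `i` first hits `V` (after time `0`) at time exactly `n`,
where `τ_V = inf {n ≥ 1 : Z_n ∈ V}`. -/
noncomputable def hitProb {S : Type*} (P : S → S → ℝ) (V : Set S) : ℕ → S → ℝ≥0∞
  | 0, _ => 0
  | 1, i => ∑' j : S, Set.indicator V (fun j => ENNReal.ofReal (P i j)) j
  | n + 2, i =>
      ∑' j : S, Set.indicator Vᶜ (fun j => ENNReal.ofReal (P i j) * hitProb P V (n + 1) j) j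


set_option linter.unusedSectionVars false
set_option linter.unusedVariables false

section basic
variable {S : Type*} [Countable S] {P : S → S → ℝ}

lemma nStep_nonneg (hP0 : ∀ i j, 0 ≤ P i j) : ∀ (n : ℕ) (i j : S), 0 ≤ nStep P n i j := by
  intro n
  induction n with
  | zero => intro i j; simp only [nStep]; split <;> norm_num
  | succ n ih =>
    intro i j
    rw [show nStep P (n+1) i j = ∑' k : S, P i k * nStep P n k j from rfl]
    exact tsum_nonneg fun k => mul_nonneg (hP0 i k) (ih k j)

lemma nStep_hasSum (hP0 : ∀ i j, 0 ≤ P i j) (hP1 : ∀ i, HasSum (P i) 1) :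
    ∀ (n : ℕ) (i : S), HasSum (nStep P n i) 1 := by
  intro n
  induction n with
  | zero =>
    intro i
    have : (nStep P 0 i) = fun j => if j = i then (1:ℝ) else 0 := by
      funext j; simp only [nStep, eq_comm]
    rw [this]
    exact hasSum_ite_eq i 1
  | succ n ih =>
    intro i
    have hle1 : ∀ (k j : S), nStep P n k j ≤ 1 := fun k j =>
      le_hasSum (ih k) j (fun m _ => nStep_nonneg hP0 n k m)
    have hnn := nStep_nonneg hP0 (P := P)
    have hrow : ∀ j, Summable (fun k => P i k * nStep P n k j) := by
      intro j
      refine Summable.of_nonneg_of_le (fun k => mul_nonneg (hP0 i k) (hnn n k j))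
        (fun k => ?_) (hP1 i).summable
      calc P i k * nStep P n k j ≤ P i k * 1 :=
            mul_le_mul_of_nonneg_left (hle1 k j) (hP0 i k)
        _ = P i k := mul_one _
    have key : ∑' j : S, ENNReal.ofReal (nStep P (n+1) i j) = 1 := by
      have e1 : ∀ j : S, ENNReal.ofReal (nStep P (n+1) i j)
          = ∑' k : S, ENNReal.ofReal (P i k) * ENNReal.ofReal (nStep P n k j) := by
        intro j
        rw [show nStep P (n+1) i j = ∑' k : S, P i k * nStep P n k j from rfl,
          ENNReal.ofReal_tsum_of_nonneg (fun k => mul_nonneg (hP0 i k) (hnn n k j)) (hrow j)]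
        exact tsum_congr fun k => ENNReal.ofReal_mul (hP0 i k)
      calc ∑' j : S, ENNReal.ofReal (nStep P (n+1) i j)
          = ∑' (j : S) (k : S), ENNReal.ofReal (P i k) * ENNReal.ofReal (nStep P n k j) :=
            tsum_congr e1
        _ = ∑' (k : S) (j : S), ENNReal.ofReal (P i k) * ENNReal.ofReal (nStep P n k j) :=
            ENNReal.tsum_comm
        _ = ∑' (k : S), ENNReal.ofReal (P i k) * ∑' (j : S), ENNReal.ofReal (nStep P n k j) :=
            tsum_congr fun k => ENNReal.tsum_mul_left
        _ = ∑' (k : S), ENNReal.ofReal (P i k) := by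
            refine tsum_congr fun k => ?_
            rw [← ENNReal.ofReal_tsum_of_nonneg (fun j => hnn n k j) (ih k).summable,
              (ih k).tsum_eq, ENNReal.ofReal_one, mul_one]
        _ = ENNReal.ofReal (∑' k : S, P i k) :=
            (ENNReal.ofReal_tsum_of_nonneg (fun k => hP0 i k) (hP1 i).summable).symm
        _ = 1 := by rw [(hP1 i).tsum_eq, ENNReal.ofReal_one]
    have hsum : Summable (nStep P (n+1) i) := by
      have h' : (∑' j : S, ENNReal.ofReal (nStep P (n+1) i j)) ≠ ⊤ := by
        rw [key]; exact ENNReal.one_ne_top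
      exact (ENNReal.summable_toReal h').congr fun j =>
        ENNReal.toReal_ofReal (hnn (n+1) i j)
    have htsum : (∑' j, nStep P (n+1) i j) = 1 := by
      have h2 := ENNReal.ofReal_tsum_of_nonneg (fun j => hnn (n+1) i j) hsum
      rw [key] at h2
      have h01 : (0:ℝ) ≤ ∑' j, nStep P (n+1) i j := tsum_nonneg fun j => hnn (n+1) i j
      have h3 := congrArg ENNReal.toReal h2
      rwa [ENNReal.toReal_ofReal h01, ENNReal.toReal_one] at h3
    rw [← htsum]
    exact hsum.hasSum

lemma nStep_le_one (hP0 : ∀ i j, 0 ≤ P i j) (hP1 : ∀ i, HasSum (P i) 1) (n : ℕ) (i j : S) :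
    nStep P n i j ≤ 1 :=
  le_hasSum (nStep_hasSum hP0 hP1 n i) j (fun m _ => nStep_nonneg hP0 n i m)

lemma ofReal_nStep_tsum (hP0 : ∀ i j, 0 ≤ P i j) (hP1 : ∀ i, HasSum (P i) 1) (n : ℕ) (i : S) :
    ∑' j : S, ENNReal.ofReal (nStep P n i j) = 1 := by
  rw [← ENNReal.ofReal_tsum_of_nonneg (fun j => nStep_nonneg hP0 n i j)
    (nStep_hasSum hP0 hP1 n i).summable, (nStep_hasSum hP0 hP1 n i).tsum_eq,
    ENNReal.ofReal_one]

lemma tsum_pos_exists {g : S → ℝ} (hg : 0 < ∑' k, g k) : ∃ k, 0 < g k := by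
  by_contra h
  push_neg at h
  exact absurd (tsum_nonpos h) (by linarith)

lemma nStep_prod_le (hP0 : ∀ i j, 0 ≤ P i j) (hP1 : ∀ i, HasSum (P i) 1)
    (m n : ℕ) (j k : S) : ∀ i : S, nStep P m i j * nStep P n j k ≤ nStep P (m + n) i k := by
  induction m with
  | zero =>
    intro i
    by_cases h : i = j
    · subst h; simp [nStep]
    · simp [nStep, h]
      exact nStep_nonneg hP0 n i k
  | succ m ih =>
    intro i
    have hnn := nStep_nonneg hP0 (P := P)
    rw [show nStep P (m+1) i j = ∑' l, P i l * nStep P m l j from rfl,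
      show m + 1 + n = (m + n) + 1 from by omega,
      show nStep P ((m+n)+1) i k = ∑' l, P i l * nStep P (m+n) l k from rfl,
      ← tsum_mul_right]
    refine Summable.tsum_le_tsum (fun l => ?_) ?_ ?_
    · rw [mul_assoc]
      exact mul_le_mul_of_nonneg_left (ih l) (hP0 i l)
    · refine Summable.of_nonneg_of_le
        (fun l => mul_nonneg (mul_nonneg (hP0 i l) (hnn m l j)) (hnn n j k))
        (fun l => ?_) (hP1 i).summable
      calc P i l * nStep P m l j * nStep P n j k ≤ P i l * 1 * 1 := by
            apply mul_le_mul (mul_le_mul_of_nonneg_left (nStep_le_one hP0 hP1 m l j) (hP0 i l))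
              (nStep_le_one hP0 hP1 n j k) (hnn n j k)
            rw [mul_one]; exact hP0 i l
        _ = P i l := by ring
    · refine Summable.of_nonneg_of_le (fun l => mul_nonneg (hP0 i l) (hnn _ l k))
        (fun l => ?_) (hP1 i).summable
      calc P i l * nStep P (m+n) l k ≤ P i l * 1 :=
            mul_le_mul_of_nonneg_left (nStep_le_one hP0 hP1 _ l k) (hP0 i l)
        _ = P i l := mul_one _

end basic

section two
variable {S : Type*} [Countable S] {P : S → S → ℝ}

lemma accessible_refl (i : S) : Accessible P i i :=
  ⟨0, by simp [nStep]⟩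

lemma accessible_trans (hP0 : ∀ i j, 0 ≤ P i j) (hP1 : ∀ i, HasSum (P i) 1)
    (hprod : ∀ (m n : ℕ) (j k i : S), nStep P m i j * nStep P n j k ≤ nStep P (m + n) i k)
    {i j k : S} (h1 : Accessible P i j) (h2 : Accessible P j k) : Accessible P i k := by
  obtain ⟨m, hm⟩ := h1
  obtain ⟨n, hn⟩ := h2
  exact ⟨m + n, lt_of_lt_of_le (mul_pos hm hn) (hprod m n j k i)⟩

/-- if `nStep n i j > 0` then `|f j - f i| ≤ n * b`. -/
lemma nStep_jump (hP0 : ∀ i j, 0 ≤ P i j) {f : S → ℝ} {b : ℝ} (hb : 0 < b)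
    (hjump : ∀ i j, b < |f j - f i| → P i j = 0) :
    ∀ (n : ℕ) (i j : S), 0 < nStep P n i j → |f j - f i| ≤ n * b := by
  intro n
  induction n with
  | zero =>
    intro i j h
    by_cases hij : i = j
    · subst hij; simp
    · simp [nStep, hij] at h
  | succ n ih =>
    intro i j h
    rw [show nStep P (n+1) i j = ∑' k, P i k * nStep P n k j from rfl] at h
    obtain ⟨k, hk⟩ := tsum_pos_exists h
    have hPik : 0 < P i k := by
      rcases lt_or_ge 0 (P i k) with h'|h'
      · exact h'
      · exfalso; nlinarith [nStep_nonneg hP0 n k j, hk]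
    have hnkj : 0 < nStep P n k j := by nlinarith [hP0 i k]
    have h1 : |f k - f i| ≤ b := by
      by_contra hcon; push_neg at hcon
      exact absurd (hjump i k hcon) (ne_of_gt hPik)
    have h2 := ih k j hnkj
    calc |f j - f i| = |(f j - f k) + (f k - f i)| := by ring_nf
      _ ≤ |f j - f k| + |f k - f i| := abs_add_le _ _
      _ ≤ n * b + b := add_le_add h2 h1
      _ = (n + 1 : ℕ) * b := by push_cast; ring

/-- real inequality: `exp (-x) ≤ 1 - x + x^2` for `|x| ≤ 1`. -/
lemma exp_neg_le (x : ℝ) (hx : |x| ≤ 1) : Real.exp (-x) ≤ 1 - x + x ^ 2 := by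
  have h := Real.exp_bound (x := -x) (by rwa [abs_neg]) (n := 2) (by norm_num)
  have h2 : |Real.exp (-x) - (1 + -x)| ≤ |x| ^ 2 * (3 / 4) := by
    have : ∑ m ∈ Finset.range 2, (-x) ^ m / (m.factorial : ℝ) = 1 + -x := by
      simp [Finset.sum_range_succ]
    rw [this] at h
    rw [abs_neg] at h
    convert h using 2
    norm_num [Nat.factorial]
  have h3 : Real.exp (-x) - (1 - x) ≤ |x| ^ 2 * (3/4) := by
    have := abs_le.mp h2
    linarith [this.2]
  have h4 : |x| ^ 2 = x ^ 2 := sq_abs x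
  nlinarith [sq_nonneg x]

end two

section three
variable {S : Type*}

/-- Exponential drift bound for one row. -/
lemma row_exp_bound (q : S → ℝ) (f : S → ℝ) (x₀ ε B lam : ℝ)
    (hq0 : ∀ k, 0 ≤ q k) (hq1 : HasSum q 1)
    (hqf : Summable (fun k => q k * f k))
    (hdrift : x₀ + ε ≤ ∑' k, q k * f k)
    (hB : 0 < B) (hε : 0 < ε)
    (hsupp : ∀ k, 0 < q k → |f k - x₀| ≤ B)
    (hlam : lam = min (1/B) (ε/B^2)) :
    ∑' k, q k * Real.exp (-(lam * (f k - x₀))) ≤ 1 := by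
  have hlam0 : 0 < lam := by
    rw [hlam]; positivity
  have hlamB : lam * B ≤ 1 := by
    rw [hlam]
    calc min (1/B) (ε/B^2) * B ≤ (1/B) * B := by
          apply mul_le_mul_of_nonneg_right (min_le_left _ _) hB.le
      _ = 1 := by field_simp
  have hlamB2 : lam * B^2 ≤ ε := by
    rw [hlam]
    calc min (1/B) (ε/B^2) * B^2 ≤ (ε/B^2) * B^2 := by
          apply mul_le_mul_of_nonneg_right (min_le_right _ _) (by positivity)
      _ = ε := by field_simp
  set Δ : S → ℝ := fun k => f k - x₀ with hΔ
  -- summability facts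
  have hsummΔ : Summable (fun k => q k * Δ k) := by
    have : (fun k => q k * Δ k) = fun k => q k * f k - x₀ * q k := by
      funext k; simp only [hΔ]; ring
    rw [this]
    exact hqf.sub (hq1.summable.mul_left x₀)
  have hsummΔ2 : Summable (fun k => q k * Δ k ^ 2) := by
    refine Summable.of_nonneg_of_le (fun k => ?_) (fun k => ?_) (hq1.summable.mul_right (B^2))
    · exact mul_nonneg (hq0 k) (sq_nonneg _)
    · rcases eq_or_lt_of_le (hq0 k) with h|h
      · rw [← h]; simp only [zero_mul]; positivity
      · have := hsupp k h
        have h2 : Δ k ^ 2 ≤ B ^ 2 := by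
          rw [← sq_abs]
          exact pow_le_pow_left₀ (abs_nonneg _) this 2
        exact mul_le_mul_of_nonneg_left h2 (hq0 k)
  have hsummE : Summable (fun k => q k * Real.exp (-(lam * Δ k))) := by
    refine Summable.of_nonneg_of_le (fun k => mul_nonneg (hq0 k) (Real.exp_nonneg _))
      (fun k => ?_) (hq1.summable.mul_right (Real.exp (lam * B)))
    rcases eq_or_lt_of_le (hq0 k) with h|h
    · rw [← h]; simp only [zero_mul]; positivity
    · have h1 := hsupp k h
      have hd : -Δ k ≤ B := by
        have := abs_le.mp h1
        simp only [hΔ]; linarith [this.1]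
      have : -(lam * Δ k) ≤ lam * B := by nlinarith
      exact mul_le_mul_of_nonneg_left (Real.exp_le_exp.mpr this) (hq0 k)
  -- termwise bound
  have hterm : ∀ k, q k * Real.exp (-(lam * Δ k)) ≤
      q k * (1 - lam * Δ k + (lam * Δ k) ^ 2) := by
    intro k
    rcases eq_or_lt_of_le (hq0 k) with h|h
    · rw [← h]; simp
    · have h1 := hsupp k h
      have hx : |lam * Δ k| ≤ 1 := by
        rw [abs_mul, abs_of_pos hlam0]
        calc lam * |Δ k| ≤ lam * B := mul_le_mul_of_nonneg_left h1 hlam0.le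
          _ ≤ 1 := hlamB
      exact mul_le_mul_of_nonneg_left (exp_neg_le _ hx) (hq0 k)
  have hsummRHS : Summable (fun k => q k * (1 - lam * Δ k + (lam * Δ k) ^ 2)) := by
    have : (fun k => q k * (1 - lam * Δ k + (lam * Δ k) ^ 2)) =
        fun k => (q k - lam * (q k * Δ k)) + lam ^ 2 * (q k * Δ k ^ 2) := by
      funext k; ring
    rw [this]
    exact ((hq1.summable.sub (hsummΔ.mul_left lam)).add ((hsummΔ2.mul_left (lam ^ 2))))
  have step1 : ∑' k, q k * Real.exp (-(lam * Δ k)) ≤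
      ∑' k, q k * (1 - lam * Δ k + (lam * Δ k) ^ 2) :=
    Summable.tsum_le_tsum hterm hsummE hsummRHS
  -- compute RHS
  have hΔsum : ε ≤ ∑' k, q k * Δ k := by
    have : (fun k => q k * Δ k) = fun k => q k * f k - x₀ * q k := by
      funext k; simp only [hΔ]; ring
    rw [this, Summable.tsum_sub hqf (hq1.summable.mul_left x₀), tsum_mul_left, hq1.tsum_eq, mul_one]
    linarith
  have hΔ2sum : ∑' k, q k * Δ k ^ 2 ≤ B ^ 2 := by
    calc ∑' k, q k * Δ k ^ 2 ≤ ∑' k, q k * B ^ 2 := by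
          refine Summable.tsum_le_tsum (fun k => ?_) hsummΔ2 (hq1.summable.mul_right _)
          rcases eq_or_lt_of_le (hq0 k) with h|h
          · rw [← h]; simp
          · have h2 : Δ k ^ 2 ≤ B ^ 2 := by
              rw [← sq_abs]
              exact pow_le_pow_left₀ (abs_nonneg _) (hsupp k h) 2
            exact mul_le_mul_of_nonneg_left h2 (hq0 k)
      _ = B ^ 2 := by rw [tsum_mul_right, hq1.tsum_eq, one_mul]
  have hRHS : ∑' k, q k * (1 - lam * Δ k + (lam * Δ k) ^ 2) =
      1 - lam * (∑' k, q k * Δ k) + lam ^ 2 * (∑' k, q k * Δ k ^ 2) := by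
    have e : (fun k => q k * (1 - lam * Δ k + (lam * Δ k) ^ 2)) =
        fun k => (q k - lam * (q k * Δ k)) + lam ^ 2 * (q k * Δ k ^ 2) := by
      funext k; ring
    rw [e, Summable.tsum_add (hq1.summable.sub (hsummΔ.mul_left lam)) (hsummΔ2.mul_left (lam^2)),
      Summable.tsum_sub hq1.summable (hsummΔ.mul_left lam), hq1.tsum_eq, tsum_mul_left, tsum_mul_left]
  rw [hRHS] at step1
  have final : 1 - lam * (∑' k, q k * Δ k) + lam ^ 2 * (∑' k, q k * Δ k ^ 2) ≤ 1 := by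
    have h1 : lam * ε ≤ lam * (∑' k, q k * Δ k) := mul_le_mul_of_nonneg_left hΔsum hlam0.le
    have h2 : lam ^ 2 * (∑' k, q k * Δ k ^ 2) ≤ lam ^ 2 * B ^ 2 :=
      mul_le_mul_of_nonneg_left hΔ2sum (sq_nonneg _)
    have h3 : lam ^ 2 * B ^ 2 ≤ lam * ε := by
      have := mul_le_mul_of_nonneg_left hlamB2 hlam0.le
      nlinarith
    linarith
  linarith

end three

/-- partial sums of hitting probabilities -/
noncomputable def Fpart {S : Type*} (P : S → S → ℝ) (V : Set S) (N : ℕ) (i : S) : ℝ≥0∞ :=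
  ∑ n ∈ Finset.range N, hitProb P V n i


section four
variable {S : Type*} [Countable S] {P : S → S → ℝ} {V : Set S}

lemma indicator_tsum_split (g : S → ℝ≥0∞) :
    (∑' k, V.indicator g k) + (∑' k, Vᶜ.indicator g k) = ∑' k, g k := by
  rw [← ENNReal.tsum_add]
  refine tsum_congr fun k => ?_
  by_cases h : k ∈ V <;> simp [Set.indicator_apply, h]

lemma Fpart_mono (M N : ℕ) (h : M ≤ N) (i : S) : Fpart P V M i ≤ Fpart P V N i :=
  Finset.sum_le_sum_of_subset (Finset.range_subset_range.mpr h)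

/-- the key unfolding: `Fpart (N+2) i = hit1 i + ∑'_{k ∉ V} P i k * Fpart (N+1) k`. -/
lemma Fpart_succ_succ (N : ℕ) (i : S) :
    Fpart P V (N + 2) i = hitProb P V 1 i +
      ∑' k, Vᶜ.indicator (fun k => ENNReal.ofReal (P i k) * Fpart P V (N + 1) k) k := by
  have e0 : Fpart P V (N + 2) i
      = (∑ n ∈ Finset.range N, hitProb P V (n + 2) i) + hitProb P V 1 i := by
    rw [Fpart, Finset.sum_range_succ' _ (N + 1), Finset.sum_range_succ' _ N]
    simp [hitProb]
  have e1 : ∑ n ∈ Finset.range N, hitProb P V (n + 2) i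
      = ∑' k, Vᶜ.indicator (fun k => ENNReal.ofReal (P i k) * Fpart P V (N + 1) k) k := by
    calc ∑ n ∈ Finset.range N, hitProb P V (n + 2) i
        = ∑ n ∈ Finset.range N, ∑' k,
            Vᶜ.indicator (fun k => ENNReal.ofReal (P i k) * hitProb P V (n + 1) k) k := rfl
      _ = ∑' k, ∑ n ∈ Finset.range N,
            Vᶜ.indicator (fun k => ENNReal.ofReal (P i k) * hitProb P V (n + 1) k) k :=
          (Summable.tsum_finsetSum (fun n _ => ENNReal.summable)).symm
      _ = ∑' k, Vᶜ.indicator (fun k => ENNReal.ofReal (P i k) * Fpart P V (N + 1) k) k := by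
          refine tsum_congr fun k => ?_
          by_cases h : k ∈ V
          · simp [Set.indicator_apply, h]
          · simp only [Set.indicator_apply, Set.mem_compl_iff, h, not_false_iff, if_true]
            have e2 : Fpart P V (N+1) k = ∑ x ∈ Finset.range N, hitProb P V (x+1) k := by
              rw [Fpart, Finset.sum_range_succ']
              simp [hitProb]
            rw [e2, Finset.mul_sum]
  rw [e0, e1, add_comm]

end four

section five
variable {S : Type*} [Countable S] {P : S → S → ℝ} {V : Set S}

lemma Fpart_le_one (hrow : ∀ i, ∑' k, ENNReal.ofReal (P i k) = 1) :
    ∀ (N : ℕ) (i : S), Fpart P V N i ≤ 1 := by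
  intro N
  induction N using Nat.strong_induction_on with
  | _ N ih =>
    match N with
    | 0 => intro i; simp [Fpart]
    | 1 => intro i; simp [Fpart, hitProb]
    | (N + 2) =>
      intro i
      rw [Fpart_succ_succ]
      have h1 : hitProb P V 1 i = ∑' k, V.indicator (fun k => ENNReal.ofReal (P i k)) k := rfl
      rw [h1]
      calc (∑' k, V.indicator (fun k => ENNReal.ofReal (P i k)) k)
            + ∑' k, Vᶜ.indicator (fun k => ENNReal.ofReal (P i k) * Fpart P V (N + 1) k) k
          ≤ (∑' k, V.indicator (fun k => ENNReal.ofReal (P i k)) k)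
            + ∑' k, Vᶜ.indicator (fun k => ENNReal.ofReal (P i k)) k := by
            refine add_le_add le_rfl (Summable.tsum_le_tsum (fun k => ?_) ENNReal.summable ENNReal.summable)
            by_cases h : k ∈ V
            · simp [Set.indicator_apply, h]
            · simp only [Set.indicator_apply, Set.mem_compl_iff, h, not_false_iff, if_true]
              calc ENNReal.ofReal (P i k) * Fpart P V (N + 1) k
                  ≤ ENNReal.ofReal (P i k) * 1 :=
                    mul_le_mul_right (ih (N + 1) (by omega) k) _
                _ = ENNReal.ofReal (P i k) := mul_one _
        _ = ∑' k, ENNReal.ofReal (P i k) := indicator_tsum_split _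
        _ = 1 := hrow i

lemma tsum_hitProb_eq_iSup (i : S) :
    ∑' n, hitProb P V n i = ⨆ N, Fpart P V N i := by
  exact ENNReal.tsum_eq_iSup_nat

lemma tsum_hitProb_le_one (hrow : ∀ i, ∑' k, ENNReal.ofReal (P i k) = 1) (i : S) :
    ∑' n, hitProb P V n i ≤ 1 := by
  rw [tsum_hitProb_eq_iSup]
  exact iSup_le fun N => Fpart_le_one hrow N i

end five

section six
variable {S : Type*} [Countable S] {P : S → S → ℝ} {i₀ : S}

lemma hitProb_one_eq (j : S) :
    hitProb P {i₀} 1 j = ENNReal.ofReal (P j i₀) := by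
  have : hitProb P {i₀} 1 j
      = ∑' k, Set.indicator {i₀} (fun k => ENNReal.ofReal (P j k)) k := rfl
  rw [this, tsum_eq_single i₀ (fun k hk => by simp [Set.indicator_apply, hk])]
  simp [Set.indicator_apply]

/-- one-step expansion, valid when the chain cannot jump from `j` to `i₀`. -/
lemma Fpart_one_step {j : S} (hj : P j i₀ = 0) (M : ℕ) :
    Fpart P {i₀} (M + 1) j = ∑' k, ENNReal.ofReal (P j k) * Fpart P {i₀} M k := by
  cases M with
  | zero => simp [Fpart, hitProb]
  | succ M =>
    rw [Fpart_succ_succ, hitProb_one_eq, hj, ENNReal.ofReal_zero, zero_add]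
    refine tsum_congr fun k => ?_
    by_cases h : k = i₀
    · subst h; simp [Set.indicator_apply, hj]
    · simp [Set.indicator_apply, h]

end six

section seven
variable {S : Type*} [Countable S] {P : S → S → ℝ} {i₀ : S}


lemma Fpart_block (hP0 : ∀ i j, 0 ≤ P i j) (hP1 : ∀ i, HasSum (P i) 1)
    {f : S → ℝ} {b : ℝ} (hb : 0 < b)
    (hjump : ∀ i j, b < |f j - f i| → P i j = 0) :
    ∀ (m : ℕ) (j : S) (N : ℕ), f i₀ + m * b < f j →
    Fpart P {i₀} (N + m) j = ∑' k, ENNReal.ofReal (nStep P m j k) * Fpart P {i₀} N k := by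
  intro m
  induction m with
  | zero =>
    intro j N _
    rw [Nat.add_zero, tsum_eq_single j (fun k hk => by
      have : nStep P 0 k = fun l => if k = l then (1:ℝ) else 0 := rfl
      simp [nStep, Ne.symm hk])]
    simp [nStep]
  | succ m ih =>
    intro j N h
    have hPji₀ : P j i₀ = 0 := by
      apply hjump
      have : (0:ℝ) ≤ m * b := by positivity
      rw [abs_sub_comm]
      rw [abs_of_pos (by push_cast at h ⊢; nlinarith)]
      push_cast at h ⊢; nlinarith
    have e1 : Fpart P {i₀} (N + (m + 1)) j
        = ∑' k, ENNReal.ofReal (P j k) * Fpart P {i₀} (N + m) k := by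
      rw [show N + (m+1) = (N + m) + 1 from by omega]
      exact Fpart_one_step hPji₀ (N + m)
    rw [e1]
    have e2 : ∀ k, ENNReal.ofReal (P j k) * Fpart P {i₀} (N + m) k
        = ENNReal.ofReal (P j k) * ∑' l, ENNReal.ofReal (nStep P m k l) * Fpart P {i₀} N l := by
      intro k
      rcases eq_or_lt_of_le (hP0 j k) with hk|hk
      · rw [← hk]; simp
      · congr 1
        refine ih k N ?_
        have hjk : |f k - f j| ≤ b := by
          by_contra hcon; push_neg at hcon
          exact absurd (hjump j k hcon) (ne_of_gt hk)
        have := abs_le.mp hjk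
        push_cast at h ⊢; nlinarith [this.1]
    calc ∑' k, ENNReal.ofReal (P j k) * Fpart P {i₀} (N + m) k
        = ∑' (k : S) (l : S), ENNReal.ofReal (P j k) * ENNReal.ofReal (nStep P m k l)
            * Fpart P {i₀} N l := by
          refine tsum_congr fun k => ?_
          rw [e2 k, ← ENNReal.tsum_mul_left]
          exact tsum_congr fun l => by rw [mul_assoc]
      _ = ∑' (l : S) (k : S), ENNReal.ofReal (P j k) * ENNReal.ofReal (nStep P m k l)
            * Fpart P {i₀} N l := ENNReal.tsum_comm
      _ = ∑' l : S, ENNReal.ofReal (nStep P (m+1) j l) * Fpart P {i₀} N l := by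
          refine tsum_congr fun l => ?_
          rw [ENNReal.tsum_mul_right]
          congr 1
          have hsumm : Summable (fun k => P j k * nStep P m k l) := by
            refine Summable.of_nonneg_of_le
              (fun k => mul_nonneg (hP0 j k) (nStep_nonneg hP0 m k l))
              (fun k => ?_) (hP1 j).summable
            calc P j k * nStep P m k l ≤ P j k * 1 :=
                  mul_le_mul_of_nonneg_left (nStep_le_one hP0 hP1 m k l) (hP0 j k)
              _ = P j k := mul_one _
          rw [show nStep P (m+1) j l = ∑' k, P j k * nStep P m k l from rfl,
            ENNReal.ofReal_tsum_of_nonneg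
              (fun k => mul_nonneg (hP0 j k) (nStep_nonneg hP0 m k l)) hsumm]
          exact tsum_congr fun k => (ENNReal.ofReal_mul (hP0 j k)).symm

end seven

section survival
variable {S : Type*} [Countable S] {P : S → S → ℝ} {i₀ : S}

lemma ofReal_row (hP0 : ∀ i j, 0 ≤ P i j) (hP1 : ∀ i, HasSum (P i) 1) (i : S) :
    ∑' k, ENNReal.ofReal (P i k) = 1 := by
  rw [← ENNReal.ofReal_tsum_of_nonneg (fun k => hP0 i k) (hP1 i).summable,
    (hP1 i).tsum_eq, ENNReal.ofReal_one]

lemma survival (hP0 : ∀ i j, 0 ≤ P i j) (hP1 : ∀ i, HasSum (P i) 1)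
    (τ : S → ℕ) (Tmax : ℕ) (hτpos : ∀ i, 0 < τ i) (hτbd : ∀ i, τ i ≤ Tmax)
    (f : S → ℝ) (ε c b : ℝ) (hε : 0 < ε) (hb : 0 < b)
    (hdrift : ∀ i, c < f i →
      Summable (fun j => nStep P (τ i) i j * f j) ∧
      f i + ε ≤ ∑' j : S, nStep P (τ i) i j * f j)
    (hjump : ∀ i j, b < |f j - f i| → P i j = 0)
    (B c' lam : ℝ) (hB : B = (Tmax : ℝ) * b) (hc' : c' = max c (f i₀ + B))
    (hlam : lam = min (1/B) (ε/B^2)) :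
    ∀ (N : ℕ) (j : S), c' < f j →
      Fpart P {i₀} N j ≤ ENNReal.ofReal (Real.exp (-(lam * (f j - c' - B)))) := by
  have hTmax : 0 < Tmax := lt_of_lt_of_le (hτpos i₀) (hτbd i₀)
  have hBpos : 0 < B := by rw [hB]; positivity
  have hlam0 : 0 < lam := by rw [hlam]; positivity
  intro N
  induction N using Nat.strong_induction_on with
  | _ N ih =>
    intro j hj
    have hjc : c < f j := lt_of_le_of_lt (le_max_left _ _) (by rw [← hc']; exact hj)
    set m := τ j with hm
    have hm1 : 0 < m := hτpos j
    have hmb : f i₀ + (m : ℝ) * b < f j := by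
      have h1 : (m : ℝ) * b ≤ B := by
        rw [hB]
        apply mul_le_mul_of_nonneg_right _ hb.le
        exact_mod_cast hτbd j
      have h2 : f i₀ + B ≤ c' := by rw [hc']; exact le_max_right _ _
      linarith [hj]
    by_cases hN : N ≤ m
    · -- too early: Fpart N j = 0
      have h0 : Fpart P {i₀} m j = 0 := by
        have := Fpart_block hP0 hP1 hb hjump m j 0 hmb
        rw [Nat.zero_add] at this
        rw [this]
        simp [Fpart]
      calc Fpart P {i₀} N j ≤ Fpart P {i₀} m j := Fpart_mono N m hN j
        _ = 0 := h0
        _ ≤ _ := zero_le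
    · push_neg at hN
      have hsplit : N = (N - m) + m := by omega
      have hblock := Fpart_block hP0 hP1 hb hjump m j (N - m) hmb
      rw [hsplit, hblock]
      -- termwise bound
      set q : S → ℝ := fun k => nStep P m j k with hq
      have hq0 : ∀ k, 0 ≤ q k := fun k => nStep_nonneg hP0 m j k
      have hq1 : HasSum q 1 := nStep_hasSum hP0 hP1 m j
      have hsupp : ∀ k, 0 < q k → |f k - f j| ≤ B := by
        intro k hk
        calc |f k - f j| ≤ (m : ℝ) * b := nStep_jump hP0 hb hjump m j k hk
          _ ≤ B := by
            rw [hB]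
            apply mul_le_mul_of_nonneg_right _ hb.le
            exact_mod_cast hτbd j
      have hterm : ∀ k, ENNReal.ofReal (q k) * Fpart P {i₀} (N - m) k
          ≤ ENNReal.ofReal (q k * Real.exp (-(lam * (f k - c' - B)))) := by
        intro k
        rw [ENNReal.ofReal_mul (hq0 k)]
        rcases eq_or_lt_of_le (hq0 k) with h|h
        · rw [← h]; simp
        · apply mul_le_mul_right
          by_cases hk : c' < f k
          · exact ih (N - m) (by omega) k hk
          · push_neg at hk
            calc Fpart P {i₀} (N - m) k ≤ 1 := Fpart_le_one (ofReal_row hP0 hP1) _ k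
              _ ≤ ENNReal.ofReal (Real.exp (-(lam * (f k - c' - B)))) := by
                  rw [ENNReal.one_le_ofReal]
                  apply Real.one_le_exp
                  nlinarith
      -- summability of the real-valued bound
      have hsummE : Summable (fun k => q k * Real.exp (-(lam * (f k - c' - B)))) := by
        refine Summable.of_nonneg_of_le
          (fun k => mul_nonneg (hq0 k) (Real.exp_nonneg _)) (fun k => ?_)
          (hq1.summable.mul_right (Real.exp (lam * (c' + 2*B - f j))))
        rcases eq_or_lt_of_le (hq0 k) with h|h
        · rw [← h]; simp only [zero_mul]; positivity
        · apply mul_le_mul_of_nonneg_left _ (hq0 k)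
          apply Real.exp_le_exp.mpr
          have := abs_le.mp (hsupp k h)
          nlinarith [this.1]
      calc ∑' k, ENNReal.ofReal (q k) * Fpart P {i₀} (N - m) k
          ≤ ∑' k, ENNReal.ofReal (q k * Real.exp (-(lam * (f k - c' - B)))) :=
            Summable.tsum_le_tsum hterm ENNReal.summable ENNReal.summable
        _ = ENNReal.ofReal (∑' k, q k * Real.exp (-(lam * (f k - c' - B)))) :=
            (ENNReal.ofReal_tsum_of_nonneg
              (fun k => mul_nonneg (hq0 k) (Real.exp_nonneg _)) hsummE).symm
        _ ≤ ENNReal.ofReal (Real.exp (-(lam * (f j - c' - B)))) := by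
            apply ENNReal.ofReal_le_ofReal
            have efact : ∀ k, q k * Real.exp (-(lam * (f k - c' - B)))
                = (q k * Real.exp (-(lam * (f k - f j)))) * Real.exp (-(lam * (f j - c' - B))) := by
              intro k
              rw [mul_assoc, ← Real.exp_add]
              ring_nf
            calc ∑' k, q k * Real.exp (-(lam * (f k - c' - B)))
                = (∑' k, q k * Real.exp (-(lam * (f k - f j))))
                    * Real.exp (-(lam * (f j - c' - B))) := by
                  rw [← tsum_mul_right]
                  exact tsum_congr efact
              _ ≤ 1 * Real.exp (-(lam * (f j - c' - B))) := by
                  apply mul_le_mul_of_nonneg_right _ (Real.exp_nonneg _)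
                  exact row_exp_bound q f (f j) ε B lam hq0 hq1 (hdrift j hjc).1
                    (hdrift j hjc).2 hBpos hε hsupp hlam
              _ = Real.exp (-(lam * (f j - c' - B))) := one_mul _

end survival

section eight
variable {S : Type*} [Countable S] {P : S → S → ℝ} {i₀ : S}

/-- total hitting probability of `{i₀}` -/
noncomputable def Htot (P : S → S → ℝ) (i₀ : S) (j : S) : ℝ≥0∞ :=
  ∑' n, hitProb P {i₀} n j

lemma Htot_rec (j : S) :
    Htot P i₀ j = ENNReal.ofReal (P j i₀)
      + ∑' k, Set.indicator ({i₀}ᶜ) (fun k => ENNReal.ofReal (P j k) * Htot P i₀ k) k := by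
  have shift : ∀ k : S, ∑' n, hitProb P {i₀} (n + 1) k = Htot P i₀ k := by
    intro k
    have h0 : (∑' n, hitProb P {i₀} n k)
        = hitProb P {i₀} 0 k + ∑' n, hitProb P {i₀} (n + 1) k :=
      tsum_eq_zero_add' ENNReal.summable
    rw [show hitProb P {i₀} 0 k = (0 : ℝ≥0∞) from rfl, zero_add] at h0
    exact h0.symm
  calc Htot P i₀ j = hitProb P {i₀} 0 j + ∑' n, hitProb P {i₀} (n + 1) j :=
        tsum_eq_zero_add' ENNReal.summable
    _ = hitProb P {i₀} 1 j + ∑' n, hitProb P {i₀} (n + 2) j := by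
        rw [show hitProb P {i₀} 0 j = 0 from rfl, zero_add,
          tsum_eq_zero_add' ENNReal.summable]
    _ = ENNReal.ofReal (P j i₀)
        + ∑' k, Set.indicator ({i₀}ᶜ) (fun k => ENNReal.ofReal (P j k) * Htot P i₀ k) k := by
        rw [hitProb_one_eq]
        congr 1
        calc ∑' n, hitProb P {i₀} (n + 2) j
            = ∑' (n : ℕ) (k : S), Set.indicator ({i₀}ᶜ)
                (fun k => ENNReal.ofReal (P j k) * hitProb P {i₀} (n + 1) k) k := rfl
          _ = ∑' (k : S) (n : ℕ), Set.indicator ({i₀}ᶜ)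
                (fun k => ENNReal.ofReal (P j k) * hitProb P {i₀} (n + 1) k) k :=
              ENNReal.tsum_comm
          _ = ∑' k, Set.indicator ({i₀}ᶜ) (fun k => ENNReal.ofReal (P j k) * Htot P i₀ k) k := by
              refine tsum_congr fun k => ?_
              by_cases h : k ∈ ({i₀}ᶜ : Set S)
              · simp only [Set.indicator_of_mem h]
                rw [ENNReal.tsum_mul_left, shift k]
              · simp [Set.indicator_of_notMem h]

lemma Htot_one_forces (hP0 : ∀ i j, 0 ≤ P i j)
    (hrow : ∀ i, ∑' k, ENNReal.ofReal (P i k) = 1)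
    (hle : ∀ k, Htot P i₀ k ≤ 1)
    {j : S} (hj : Htot P i₀ j = 1) :
    ∀ k, 0 < P j k → k = i₀ ∨ Htot P i₀ k = 1 := by
  set g : S → ℝ≥0∞ := fun k =>
    Set.indicator {i₀} (fun k => ENNReal.ofReal (P j k)) k
    + Set.indicator ({i₀}ᶜ) (fun k => ENNReal.ofReal (P j k) * Htot P i₀ k) k with hg
  have hgsum : ∑' k, g k = 1 := by
    rw [hg]
    rw [ENNReal.tsum_add]
    have h1 : ∑' k, Set.indicator {i₀} (fun k => ENNReal.ofReal (P j k)) k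
        = ENNReal.ofReal (P j i₀) := by
      rw [tsum_eq_single i₀ (fun k hk => by simp [Set.indicator_apply, hk])]
      simp
    rw [h1, ← Htot_rec j, hj]
  have hgle : ∀ k, g k ≤ ENNReal.ofReal (P j k) := by
    intro k
    rw [hg]
    by_cases h : k = i₀
    · subst h; simp [Set.indicator_apply]
    · simp only [Set.indicator_apply, Set.mem_singleton_iff, Set.mem_compl_iff, h,
        if_false, not_false_iff, if_true, zero_add]
      calc ENNReal.ofReal (P j k) * Htot P i₀ k ≤ ENNReal.ofReal (P j k) * 1 :=
            mul_le_mul_right (hle k) _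
        _ = ENNReal.ofReal (P j k) := mul_one _
  have hgeq : ∀ k, g k = ENNReal.ofReal (P j k) := by
    by_contra hcon
    push_neg at hcon
    obtain ⟨k₀, hk₀⟩ := hcon
    have hlt : g k₀ < ENNReal.ofReal (P j k₀) := lt_of_le_of_ne (hgle k₀) hk₀
    have : (∑' k, g k) < ∑' k, ENNReal.ofReal (P j k) :=
      ENNReal.tsum_lt_tsum (by rw [hgsum]; exact ENNReal.one_ne_top) hgle hlt
    rw [hgsum, hrow j] at this
    exact lt_irrefl _ this
  intro k hk
  by_cases h : k = i₀
  · exact Or.inl h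
  · right
    have := hgeq k
    rw [hg] at this
    simp only [Set.indicator_apply, Set.mem_singleton_iff, Set.mem_compl_iff, h,
      if_false, not_false_iff, if_true, zero_add] at this
    have hne : ENNReal.ofReal (P j k) ≠ 0 := by
      simp [ENNReal.ofReal_eq_zero]
      linarith
    have hnetop : ENNReal.ofReal (P j k) ≠ ⊤ := ENNReal.ofReal_ne_top
    exact (ENNReal.mul_right_inj hne hnetop).mp (by rw [this, mul_one])

lemma Htot_propagate (hP0 : ∀ i j, 0 ≤ P i j)
    (hrow : ∀ i, ∑' k, ENNReal.ofReal (P i k) = 1)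
    (hle : ∀ k, Htot P i₀ k ≤ 1)
    (h0 : Htot P i₀ i₀ = 1) :
    ∀ (n : ℕ) (j k : S), Htot P i₀ j = 1 → 0 < nStep P n j k → Htot P i₀ k = 1 := by
  intro n
  induction n with
  | zero =>
    intro j k hj hk
    by_cases h : j = k
    · subst h; exact hj
    · simp [nStep, h] at hk
  | succ n ih =>
    intro j k hj hk
    rw [show nStep P (n+1) j k = ∑' l, P j l * nStep P n l k from rfl] at hk
    obtain ⟨l, hl⟩ := tsum_pos_exists hk
    have hPjl : 0 < P j l := by
      rcases lt_or_ge 0 (P j l) with h'|h'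
      · exact h'
      · exfalso; nlinarith [nStep_nonneg hP0 n l k]
    have hnlk : 0 < nStep P n l k := by nlinarith [hP0 j l]
    rcases Htot_one_forces hP0 hrow hle hj l hPjl with h|h
    · subst h; exact ih l k h0 hnlk
    · exact ih l k h hnlk

end eight

section climb
variable {S : Type*} [Countable S] {P : S → S → ℝ}

lemma climb_step (hP0 : ∀ i j, 0 ≤ P i j)
    (hq1 : ∀ (n : ℕ) (i : S), HasSum (nStep P n i) 1)
    (τ : S → ℕ) (f : S → ℝ) (ε c : ℝ) (hε : 0 < ε)
    (hdrift : ∀ i, c < f i →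
      Summable (fun j => nStep P (τ i) i j * f j) ∧
      f i + ε ≤ ∑' j : S, nStep P (τ i) i j * f j)
    {i : S} (hi : c < f i) :
    ∃ k, 0 < nStep P (τ i) i k ∧ f i + ε/2 ≤ f k := by
  by_contra hcon
  push_neg at hcon
  have hbd : ∑' j, nStep P (τ i) i j * f j ≤ f i + ε/2 := by
    calc ∑' j, nStep P (τ i) i j * f j ≤ ∑' j, nStep P (τ i) i j * (f i + ε/2) := by
          refine Summable.tsum_le_tsum (fun j => ?_) (hdrift i hi).1
            ((hq1 (τ i) i).summable.mul_right _)
          rcases eq_or_lt_of_le (nStep_nonneg hP0 (τ i) i j) with h|h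
          · rw [← h]; simp
          · exact mul_le_mul_of_nonneg_left (hcon j h).le (nStep_nonneg hP0 (τ i) i j)
      _ = f i + ε/2 := by rw [tsum_mul_right, (hq1 (τ i) i).tsum_eq, one_mul]
  linarith [(hdrift i hi).2]

lemma climb (hP0 : ∀ i j, 0 ≤ P i j)
    (hq1 : ∀ (n : ℕ) (i : S), HasSum (nStep P n i) 1)
    (hprod : ∀ (m n : ℕ) (j k i : S), nStep P m i j * nStep P n j k ≤ nStep P (m + n) i k)
    (τ : S → ℕ) (f : S → ℝ) (ε c : ℝ) (hε : 0 < ε)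
    (hdrift : ∀ i, c < f i →
      Summable (fun j => nStep P (τ i) i j * f j) ∧
      f i + ε ≤ ∑' j : S, nStep P (τ i) i j * f j)
    {i₁ : S} (hi₁ : c < f i₁) :
    ∀ n : ℕ, ∃ j, Accessible P i₁ j ∧ f i₁ + n * (ε/2) ≤ f j := by
  intro n
  induction n with
  | zero => exact ⟨i₁, ⟨0, by simp [nStep]⟩, by simp⟩
  | succ n ih =>
    obtain ⟨j, ⟨nacc, hacc⟩, hfj⟩ := ih
    have hjc : c < f j := by
      have : (0:ℝ) ≤ n * (ε/2) := by positivity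
      linarith
    obtain ⟨k, hk1, hk2⟩ := climb_step hP0 hq1 τ f ε c hε hdrift hjc
    refine ⟨k, ⟨nacc + τ j, ?_⟩, by push_cast; linarith⟩
    calc (0:ℝ) < nStep P nacc i₁ j * nStep P (τ j) j k := mul_pos hacc hk1
      _ ≤ nStep P (nacc + τ j) i₁ k := hprod nacc (τ j) j k i₁

end climb

/-- **Transience criterion.** Let `P` be a transition matrix on a countable set `S`
whose Markov chain is semi-irreducible with (unique, closed) communicating class `S₀`
all of whose states are accessible from every state.  Let `τ : S → ℕ` be a step-size
function with positive values bounded by `Tmax` and consider the associated embedded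
chain `Z̃_n = Z_{t_n}`, whose transition matrix is `i j ↦ nStep P (τ i) i j`.
Suppose there are `f : S → ℝ` and positive reals `ε, c, b` such that, with
`A = {i | f i > c}`: (i) both `A` and its complement meet `S₀`; (ii) the embedded
one-step drift of `f` is at least `ε` on `A`; and (iii) `P i j = 0` whenever
`|f j - f i| > b`.  Then every state is transient: the return probability
`ℙ_i(∃ n ≥ 1, Z_n = i) = ∑_{n} ℙ_i(τ_{\{i\}} = n)` is `< 1` for every `i`. -/
theorem transience_criterion {S : Type*} [Countable S]
    (P : S → S → ℝ)
    (hP0 : ∀ i j, 0 ≤ P i j)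
    (hP1 : ∀ i, HasSum (P i) 1)
    (S₀ : Set S)
    (hS₀class : IsCommClass P S₀)
    (hS₀closed : IsClosedClass P S₀)
    (hS₀unique : ∀ C : Set S, IsCommClass P C → IsClosedClass P C → C = S₀)
    (hS₀acc : ∀ i : S, ∀ j ∈ S₀, Accessible P i j)
    (τ : S → ℕ) (Tmax : ℕ)
    (hτpos : ∀ i, 0 < τ i)
    (hτbd : ∀ i, τ i ≤ Tmax)
    (f : S → ℝ) (ε c b : ℝ)
    (hε : 0 < ε) (hc : 0 < c) (hb : 0 < b)
    (hA₁ : ∃ i ∈ S₀, c < f i)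
    (hA₂ : ∃ i ∈ S₀, f i ≤ c)
    (hdrift : ∀ i, c < f i →
      Summable (fun j => nStep P (τ i) i j * f j) ∧
      f i + ε ≤ ∑' j : S, nStep P (τ i) i j * f j)
    (hjump : ∀ i j, b < |f j - f i| → P i j = 0) :
    ∀ i : S, (∑' n : ℕ, hitProb P {i} n i) < 1 := by
  intro i₀
  by_contra hcon
  push_neg at hcon
  have hrow : ∀ i, ∑' k, ENNReal.ofReal (P i k) = 1 := ofReal_row hP0 hP1
  have hle : ∀ k, Htot P i₀ k ≤ 1 := fun k => tsum_hitProb_le_one hrow k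
  have h0 : Htot P i₀ i₀ = 1 := le_antisymm (hle i₀) hcon
  obtain ⟨i₁, hi₁S, hi₁⟩ := hA₁
  have hTmax : 0 < Tmax := lt_of_lt_of_le (hτpos i₀) (hτbd i₀)
  have hBpos : (0:ℝ) < (Tmax : ℝ) * b := by
    have : (0:ℝ) < (Tmax : ℝ) := by exact_mod_cast hTmax
    positivity
  set B : ℝ := (Tmax : ℝ) * b with hB
  set c' : ℝ := max c (f i₀ + B) with hc'
  set lam : ℝ := min (1/B) (ε/B^2) with hlam
  have hlam0 : 0 < lam := by rw [hlam]; positivity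
  have hq1 : ∀ (n : ℕ) (i : S), HasSum (nStep P n i) 1 := nStep_hasSum hP0 hP1
  obtain ⟨n₀, hn₀⟩ := exists_nat_gt ((c' + B - f i₁) / (ε/2))
  obtain ⟨j, hjacc, hjf⟩ := climb hP0 hq1
    (fun m n j k i => nStep_prod_le hP0 hP1 m n j k i) τ f ε c hε hdrift hi₁ n₀
  have hfj : c' + B < f j := by
    have hε2 : (0:ℝ) < ε/2 := by positivity
    have h2 : c' + B - f i₁ < n₀ * (ε/2) := (div_lt_iff₀ hε2).mp hn₀
    linarith
  have hacc : Accessible P i₀ j :=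
    accessible_trans hP0 hP1 (fun m n j k i => nStep_prod_le hP0 hP1 m n j k i)
      (hS₀acc i₀ i₁ hi₁S) hjacc
  obtain ⟨nacc, hnacc⟩ := hacc
  have hHj1 : Htot P i₀ j = 1 := Htot_propagate hP0 hrow hle h0 nacc i₀ j h0 hnacc
  have hsurv := survival hP0 hP1 τ Tmax hτpos hτbd f ε c b hε hb hdrift hjump
    B c' lam hB hc' hlam
  have hHle : Htot P i₀ j ≤ ENNReal.ofReal (Real.exp (-(lam * (f j - c' - B)))) := by
    rw [Htot, tsum_hitProb_eq_iSup]
    exact iSup_le fun N => hsurv N j (by linarith)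
  have hlt : ENNReal.ofReal (Real.exp (-(lam * (f j - c' - B)))) < 1 := by
    rw [ENNReal.ofReal_lt_one]
    rw [Real.exp_lt_one_iff]
    nlinarith
  rw [hHj1] at hHle
  exact absurd (lt_of_le_of_lt hHle hlt) (lt_irrefl 1)
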